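/- The Net graph (a triangle with one pendant vertex attached to each of its three vertices) has linear rank-width exactly 2. -/

import Mathlib

open scoped Classical

variable {V : Type*} [Fintype V] [DecidableEq V]

/-- GF(2)-rank of the adjacency submatrix `A_G[X, V \ X]`. -/
noncomputable def cutrk (G : SimpleGraph V) (X : Finset V) : ℕ :=
  (Matrix.of fun (a : X) (b : (Xᶜ : Finset V)) =>
    if G.Adj a.1 b.1 then (1 : ZMod 2) else 0).rank

/-- The cutrank of a linear ordering of the vertices. -/
noncomputable def ordCutrk (G : SimpleGraph V) (e : Fin (Fintype.card V) ≃ V) : ℕ :=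
  Finset.univ.sup fun i : Fin (Fintype.card V) => cutrk G ((Finset.Iic i).image e)

/-- Linear rank-width: minimum cutrank over all linear orderings of the vertices. -/
noncomputable def lrw (G : SimpleGraph V) : ℕ :=
  ⨅ e : Fin (Fintype.card V) ≃ V, ordCutrk G e

/-- The Net graph: a triangle `{0,1,2}` with pendant vertices `3, 4, 5` attached to
`0, 1, 2` respectively. -/
def netGraph : SimpleGraph (Fin 6) :=
  SimpleGraph.fromRel fun a b =>
    (a = 0 ∧ b = 1) ∨ (a = 1 ∧ b = 2) ∨ (a = 0 ∧ b = 2) ∨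
    (a = 0 ∧ b = 3) ∨ (a = 1 ∧ b = 4) ∨ (a = 2 ∧ b = 5)

/-! ### Auxiliary material -/

lemma netGraph_adj_iff (a b : Fin 6) :
    netGraph.Adj a b ↔ a ≠ b ∧
      (((a = 0 ∧ b = 1) ∨ (a = 1 ∧ b = 2) ∨ (a = 0 ∧ b = 2) ∨
        (a = 0 ∧ b = 3) ∨ (a = 1 ∧ b = 4) ∨ (a = 2 ∧ b = 5)) ∨
       ((b = 0 ∧ a = 1) ∨ (b = 1 ∧ a = 2) ∨ (b = 0 ∧ a = 2) ∨
        (b = 0 ∧ a = 3) ∨ (b = 1 ∧ a = 4) ∨ (b = 2 ∧ a = 5))) :=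
  SimpleGraph.fromRel_adj _ a b

instance netGraph.decAdj : DecidableRel netGraph.Adj := fun a b =>
  decidable_of_iff _ (netGraph_adj_iff a b).symm

/-- The adjacency table of the net graph, as a concrete matrix over `GF(2)`. -/
def adjT : Matrix (Fin 6) (Fin 6) (ZMod 2) :=
  !![0,1,1,1,0,0;
     1,0,1,0,1,0;
     1,1,0,0,0,1;
     1,0,0,0,0,0;
     0,1,0,0,0,0;
     0,0,1,0,0,0]

lemma cutrk_eq_adjT (X : Finset (Fin 6)) :
    cutrk netGraph X =
      (Matrix.of fun (a : X) (b : (Xᶜ : Finset (Fin 6))) => adjT a.1 b.1).rank := by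
  have h1 : ∀ x y : Fin 6, netGraph.Adj x y → adjT x y = 1 := by
    intro x y; fin_cases x <;> fin_cases y <;> decide
  have h0 : ∀ x y : Fin 6, ¬ netGraph.Adj x y → adjT x y = 0 := by
    intro x y; fin_cases x <;> fin_cases y <;> decide
  unfold cutrk
  congr 1
  funext a b
  simp only [Matrix.of_apply]
  by_cases h : netGraph.Adj a.1 b.1
  · rw [if_pos h, h1 _ _ h]
  · rw [if_neg h, h0 _ _ h]

lemma two_le_rank_of_minor {m n : Type*} [Fintype m] [Fintype n] [DecidableEq m]
    [DecidableEq n] (M : Matrix m n (ZMod 2)) (a b : m) (c d : n)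
    (h : M a c * M b d + M a d * M b c = 1) : 2 ≤ M.rank := by
  set P : Matrix (Fin 2) m (ZMod 2) :=
    Matrix.of fun s i => if i = ![a, b] s then (1 : ZMod 2) else 0 with hP
  set Q : Matrix n (Fin 2) (ZMod 2) :=
    Matrix.of fun j t => if j = ![c, d] t then (1 : ZMod 2) else 0 with hQ
  have hPQ : P * M * Q = !![M a c, M a d; M b c, M b d] := by
    ext s t
    fin_cases s <;> fin_cases t <;>
      simp only [hP, hQ, Matrix.mul_apply, Matrix.of_apply, Fin.zero_eta, Fin.mk_one, Fin.isValue] <;>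
      (repeat rw [Matrix.cons_val_zero]) <;> (repeat rw [Matrix.cons_val_one]) <;>
      (repeat rw [Matrix.cons_val_zero]) <;>
      simp [ite_mul, mul_ite, Finset.sum_ite_eq, Finset.sum_ite_eq']
  have hdet : IsUnit (!![M a c, M a d; M b c, M b d]).det := by
    rw [Matrix.det_fin_two_of, CharTwo.sub_eq_add, h]
    exact isUnit_one
  have hrk : (P * M * Q).rank = 2 := by
    rw [hPQ]
    have := Matrix.rank_of_isUnit _ ((Matrix.isUnit_iff_isUnit_det _).mpr hdet)
    simpa using this
  calc 2 = (P * M * Q).rank := hrk.symm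
    _ ≤ (P * M).rank := Matrix.rank_mul_le_left _ _
    _ ≤ M.rank := Matrix.rank_mul_le_right _ _

lemma rank_le_two_of_factor {m n : Type*} [Fintype m] [Fintype n]
    (M : Matrix m n (ZMod 2)) (N : Matrix m (Fin 2) (ZMod 2))
    (P : Matrix (Fin 2) n (ZMod 2)) (h : M = N * P) : M.rank ≤ 2 := by
  rw [h]
  refine le_trans (Matrix.rank_mul_le_left N P) ?_
  simpa using Matrix.rank_le_card_width N

lemma cut_rank_le_two (X : Finset (Fin 6)) (g : Fin 6 → Fin 2 → ZMod 2)
    (h : Fin 2 → Fin 6 → ZMod 2)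
    (H : ∀ x y : Fin 6, x ∈ X → y ∈ Xᶜ → adjT x y = ∑ k, g x k * h k y) :
    (Matrix.of fun (a : X) (b : (Xᶜ : Finset (Fin 6))) => adjT a.1 b.1).rank ≤ 2 := by
  apply rank_le_two_of_factor _ (Matrix.of fun (a : X) k => g a.1 k)
    (Matrix.of fun k (b : (Xᶜ : Finset (Fin 6))) => h k b.1)
  funext a b
  rw [Matrix.mul_apply]
  exact H a.1 b.1 a.2 b.2

/-- A good linear order on the vertices of the net graph: `3, 0, 4, 1, 5, 2`. -/
def netPerm : Equiv.Perm (Fin 6) :=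
  ⟨![3, 0, 4, 1, 5, 2], ![1, 3, 5, 0, 2, 4], by decide, by decide⟩

def netOrd : Fin (Fintype.card (Fin 6)) ≃ Fin 6 :=
  (finCongr (Fintype.card_fin 6)).trans netPerm

set_option maxHeartbeats 2000000 in
theorem stmt11 : lrw netGraph = 2 := by
  refine le_antisymm ?_ ?_
  · -- upper bound
    refine ciInf_le_of_le (OrderBot.bddBelow _) netOrd ?_
    unfold ordCutrk
    apply Finset.sup_le
    intro i _
    have hmem : (Finset.Iic i).image netOrd ∈
        ({({3} : Finset (Fin 6)), {0, 3}, {0, 3, 4}, {0, 1, 3, 4}, {0, 1, 3, 4, 5},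
          Finset.univ} : Finset (Finset (Fin 6))) := by
      revert i; decide
    simp only [Finset.mem_insert, Finset.mem_singleton] at hmem
    rcases hmem with h | h | h | h | h | h <;> rw [h, cutrk_eq_adjT]
    · exact cut_rank_le_two _
        ![![0,0], ![0,0], ![0,0], ![1,0], ![0,0], ![0,0]]
        ![![1,0,0,0,0,0], ![0,0,0,0,0,0]] (by intro x y; fin_cases x <;> fin_cases y <;> decide)
    · exact cut_rank_le_two _
        ![![1,0], ![0,0], ![0,0], ![0,0], ![0,0], ![0,0]]
        ![![0,1,1,0,0,0], ![0,0,0,0,0,0]] (by intro x y; fin_cases x <;> fin_cases y <;> decide)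
    · exact cut_rank_le_two _
        ![![1,0], ![0,0], ![0,0], ![0,0], ![0,1], ![0,0]]
        ![![0,1,1,0,0,0], ![0,1,0,0,0,0]] (by intro x y; fin_cases x <;> fin_cases y <;> decide)
    · exact cut_rank_le_two _
        ![![1,0], ![1,0], ![0,0], ![0,0], ![0,0], ![0,0]]
        ![![0,0,1,0,0,0], ![0,0,0,0,0,0]] (by intro x y; fin_cases x <;> fin_cases y <;> decide)
    · exact cut_rank_le_two _
        ![![1,0], ![1,0], ![0,0], ![0,0], ![0,0], ![1,0]]
        ![![0,0,1,0,0,0], ![0,0,0,0,0,0]] (by intro x y; fin_cases x <;> fin_cases y <;> decide)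
    · exact cut_rank_le_two _
        ![![0,0], ![0,0], ![0,0], ![0,0], ![0,0], ![0,0]]
        ![![0,0,0,0,0,0], ![0,0,0,0,0,0]] (by intro x y; fin_cases x <;> fin_cases y <;> decide)
  · -- lower bound
    have lower : ∀ X : Finset (Fin 6), X.card = 3 → 2 ≤ cutrk netGraph X := by
      have key : ∀ x y z : Fin 6, x ≠ y → x ≠ z → y ≠ z →
          ∃ a, a ∈ ({x, y, z} : Finset (Fin 6)) ∧
          ∃ b, b ∈ ({x, y, z} : Finset (Fin 6)) ∧
          ∃ c, c ∈ ({x, y, z} : Finset (Fin 6))ᶜ ∧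
          ∃ d, d ∈ ({x, y, z} : Finset (Fin 6))ᶜ ∧
          adjT a c * adjT b d + adjT a d * adjT b c = 1 := by decide
      intro X hX
      obtain ⟨x, y, z, hxy, hxz, hyz, rfl⟩ := Finset.card_eq_three.mp hX
      rw [cutrk_eq_adjT]
      have hm := key x y z hxy hxz hyz
      obtain ⟨a, ha, b, hb, c, hc, d, hd, hdet⟩ := hm
      exact two_le_rank_of_minor _ ⟨a, ha⟩ ⟨b, hb⟩ ⟨c, hc⟩ ⟨d, hd⟩ hdet
    have : Nonempty (Fin (Fintype.card (Fin 6)) ≃ Fin 6) := ⟨netOrd⟩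
    refine le_ciInf fun e => ?_
    unfold ordCutrk
    have h2 : (2 : ℕ) < Fintype.card (Fin 6) := by simp
    refine le_trans ?_ (Finset.le_sup (Finset.mem_univ (⟨2, h2⟩ : Fin (Fintype.card (Fin 6)))))
    apply lower
    rw [Finset.card_image_of_injective _ e.injective, Fin.card_Iic]
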